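/- Let G be a finite commutative group with |G| = q, and let A₁, A₂ ⊆ G be standard sets. Then δ(A₁ ∪ A₂) ≥ δ(A₁) · δ(A₂); equivalently, q · Δ(A₁ ∪ A₂) ≥ Δ(A₁) · Δ(A₂). -/

import Mathlib

open scoped Pointwise ComplexOrder

noncomputable section

def IsStandard {G : Type*} [AddCommGroup G] (A : Set G) : Prop :=
  A = -A ∧ (0 : G) ∈ A

def Delta {G : Type*} [AddCommGroup G] (A : Set G) : ℕ :=
  sSup {n | ∃ B : Finset G, ((B : Set G) - (B : Set G)) ∩ A = {0} ∧ B.card = n}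

def DeltaBar {G : Type*} [AddCommGroup G] (A : Set G) : ℕ :=
  sSup {n | ∃ B : Finset G, ((B : Set G) - (B : Set G)) ⊆ A ∧ B.card = n}

def deltaL {G : Type*} [AddCommGroup G] [Fintype G] (A : Set G) : ℝ :=
  (Delta A : ℝ) / (Fintype.card G : ℝ)

def deltaU {G : Type*} [AddCommGroup G] (A : Set G) : ℝ :=
  1 / (DeltaBar A : ℝ)

def ftrans {G : Type*} [AddCommGroup G] [Fintype G] (f : G → ℝ) (γ : AddChar G Circle) : ℂ :=
  ∑ x, (γ x : ℂ) * (f x : ℂ)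

def PosFT {G : Type*} [AddCommGroup G] [Fintype G] (f : G → ℝ) : Prop :=
  ∀ γ : AddChar G Circle, 0 ≤ ftrans f γ

def lamSet {G : Type*} [AddCommGroup G] [Fintype G] (S : Set (G → ℝ)) : Set ℝ :=
  {r | ∃ f ∈ S, PosFT f ∧ (∑ x, f x) ≠ 0 ∧ r = f 0 / ∑ x, f x}

def lam {G : Type*} [AddCommGroup G] [Fintype G] (A : Set G) : ℝ :=
  sInf (lamSet {f | f ≠ 0 ∧ ∀ x ∉ A, f x = 0})

def lamMinus {G : Type*} [AddCommGroup G] [Fintype G] (A : Set G) : ℝ :=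
  sInf (lamSet {f | f ≠ 0 ∧ ∀ x ∉ A, f x ≤ 0})

def lamPlus {G : Type*} [AddCommGroup G] [Fintype G] (A : Set G) : ℝ :=
  sInf (lamSet {f | f ≠ 0 ∧ (∀ x ∉ A, f x = 0) ∧ ∀ x ∈ A, 0 ≤ f x})

def lamPM {G : Type*} [AddCommGroup G] [Fintype G] (A : Set G) : ℝ :=
  sInf (lamSet {f | f ≠ 0 ∧ (∀ x ∉ A, f x ≤ 0) ∧ ∀ x ∈ A, 0 ≤ f x})

theorem stmt11 {G : Type*} [AddCommGroup G] [Fintype G]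
    (A₁ A₂ : Set G) (h₁ : IsStandard A₁) (h₂ : IsStandard A₂) :
    deltaL A₁ * deltaL A₂ ≤ deltaL (A₁ ∪ A₂) ∧
    (Delta A₁ : ℝ) * (Delta A₂ : ℝ) ≤ (Fintype.card G : ℝ) * (Delta (A₁ ∪ A₂) : ℝ) := by
  classical
  have hq : (0 : ℕ) < Fintype.card G := Fintype.card_pos
  -- the defining set of Delta
  set S : Set G → Set ℕ := fun A =>
    {n | ∃ B : Finset G, ((B : Set G) - (B : Set G)) ∩ A = {0} ∧ B.card = n} with hS
  have hbdd : ∀ A : Set G, BddAbove (S A) := by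
    intro A
    refine ⟨Fintype.card G, fun n hn => ?_⟩
    obtain ⟨B, -, hB⟩ := hn
    exact hB ▸ Finset.card_le_univ B
  have hmem : ∀ A : Set G, (0 : G) ∈ A → Delta A ∈ S A := by
    intro A h0
    have hne : (S A).Nonempty := by
      refine ⟨1, {0}, ?_, by simp⟩
      have : ((({0} : Finset G) : Set G) - (({0} : Finset G) : Set G)) = ({0} : Set G) := by
        simp
      rw [this]
      exact Set.inter_eq_self_of_subset_left (Set.singleton_subset_iff.2 h0)
    exact Nat.sSup_mem hne (hbdd A)
  have hpos : ∀ A : Set G, (0 : G) ∈ A → 1 ≤ Delta A := by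
    intro A h0
    obtain ⟨B, hB, hcard⟩ := hmem A h0
    rcases Nat.eq_zero_or_pos (Delta A) with h | h
    · exfalso
      rw [h, Finset.card_eq_zero] at hcard
      subst hcard
      simp at hB
    · exact h
  obtain ⟨B₁, hB₁, hc₁⟩ := hmem A₁ h₁.2
  obtain ⟨B₂, hB₂, hc₂⟩ := hmem A₂ h₂.2
  -- pigeonhole
  set F : G → ℕ := fun g => ((B₁ ×ˢ B₂).filter (fun p => p.1 + p.2 = g)).card with hF
  have hsum : ∑ g, F g = Delta A₁ * Delta A₂ := by
    rw [← hc₁, ← hc₂, ← Finset.card_product]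
    exact (Finset.card_eq_sum_card_fiberwise (fun p _ => Finset.mem_univ (p.1 + p.2))).symm
  obtain ⟨g, -, hg⟩ := Finset.exists_max_image (Finset.univ : Finset G) F ⟨0, Finset.mem_univ 0⟩
  have hpig : Delta A₁ * Delta A₂ ≤ Fintype.card G * F g := by
    rw [← hsum]
    calc ∑ x, F x ≤ ∑ _x : G, F g :=
          Finset.sum_le_sum (fun x _ => hg x (Finset.mem_univ x))
      _ = Fintype.card G * F g := by
          rw [Finset.sum_const, smul_eq_mul, Finset.card_univ]
  -- the new set B'
  set T := (B₁ ×ˢ B₂).filter (fun p => p.1 + p.2 = g) with hT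
  set B' := T.image Prod.fst with hB'
  have hmemT : ∀ p ∈ T, p.1 ∈ B₁ ∧ p.2 ∈ B₂ ∧ p.1 + p.2 = g := by
    intro p hp
    rw [hT, Finset.mem_filter, Finset.mem_product] at hp
    exact ⟨hp.1.1, hp.1.2, hp.2⟩
  have hcardB' : B'.card = F g := by
    rw [hB']
    apply Finset.card_image_of_injOn
    intro p hp p' hp' hpp
    obtain ⟨-, -, h1⟩ := hmemT p hp
    obtain ⟨-, -, h2⟩ := hmemT p' hp'
    have : p.2 = p'.2 := by
      have h3 := h1.trans h2.symm
      rw [hpp] at h3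
      exact add_left_cancel h3
    exact Prod.ext hpp this
  have hFgpos : 0 < F g := by
    have h1 := hpos A₁ h₁.2
    have h2 := hpos A₂ h₂.2
    nlinarith [hpig]
  -- B' witnesses for A₁ ∪ A₂
  have hkey : F g ∈ S (A₁ ∪ A₂) := by
    refine ⟨B', ?_, hcardB'⟩
    apply Set.eq_singleton_iff_unique_mem.2
    constructor
    · have hne : B'.Nonempty := by
        rw [← Finset.card_pos, hcardB']; exact hFgpos
      obtain ⟨b, hb⟩ := hne
      exact ⟨⟨b, hb, b, hb, sub_self b⟩, Or.inl h₁.2⟩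
    · rintro x ⟨⟨a, ha, b, hb, hab⟩, hx⟩
      rw [hB', Finset.coe_image] at ha hb
      obtain ⟨p, hp, rfl⟩ := ha
      obtain ⟨p', hp', rfl⟩ := hb
      obtain ⟨hp1, hp2, hpg⟩ := hmemT p (by exact_mod_cast hp)
      obtain ⟨hp1', hp2', hpg'⟩ := hmemT p' (by exact_mod_cast hp')
      rcases hx with hx | hx
      · have : x ∈ ((B₁ : Set G) - (B₁ : Set G)) ∩ A₁ :=
          ⟨⟨p.1, hp1, p'.1, hp1', hab⟩, hx⟩
        rw [hB₁] at this; exact this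
      · have hsub : x = p'.2 - p.2 := by
          have h3 : p.1 + p.2 = p'.1 + p'.2 := hpg.trans hpg'.symm
          rw [← hab, sub_eq_sub_iff_add_eq_add, h3]
          abel
        have : x ∈ ((B₂ : Set G) - (B₂ : Set G)) ∩ A₂ :=
          ⟨⟨p'.2, hp2', p.2, hp2, hsub.symm⟩, hx⟩
        rw [hB₂] at this; exact this
  have hle : F g ≤ Delta (A₁ ∪ A₂) := le_csSup (hbdd (A₁ ∪ A₂)) hkey
  have hmain : Delta A₁ * Delta A₂ ≤ Fintype.card G * Delta (A₁ ∪ A₂) :=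
    hpig.trans (Nat.mul_le_mul_left _ hle)
  have hmainR : (Delta A₁ : ℝ) * (Delta A₂ : ℝ) ≤
      (Fintype.card G : ℝ) * (Delta (A₁ ∪ A₂) : ℝ) := by exact_mod_cast hmain
  refine ⟨?_, hmainR⟩
  have hqR : (0 : ℝ) < (Fintype.card G : ℝ) := by exact_mod_cast hq
  rw [deltaL, deltaL, deltaL, div_mul_div_comm, div_le_div_iff₀ (by positivity) hqR]
  calc (Delta A₁ : ℝ) * (Delta A₂ : ℝ) * (Fintype.card G : ℝ)
      ≤ (Fintype.card G : ℝ) * (Delta (A₁ ∪ A₂) : ℝ) * (Fintype.card G : ℝ) := by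
        exact mul_le_mul_of_nonneg_right hmainR hqR.le
    _ = (Delta (A₁ ∪ A₂) : ℝ) * ((Fintype.card G : ℝ) * (Fintype.card G : ℝ)) := by ring
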